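/- arXiv:2204.13466 — 2 statements merged into one kernel-verified Lean document; each statement's English description precedes it below -/
import Mathlib

section
/- A network N is regular if and only if (i) for all vertices u, v of N it holds that C(u) ⊆ C(v) if and only if u ⪯_N v, and (ii) N is shortcut-free. -/
namespace PhyloNet

/-- A (rooted) network on a set `X` of taxa: a finite directed acyclic graph with a
unique vertex of indegree 0 (the root), whose vertices of outdegree 0 (the leaves)
are exactly the elements of `X` (via the injection `leafEmb`). -/
structure Network (X : Type) where
  V : Type
  [fintypeV : Fintype V]
  E : V → V → Prop
  leafEmb : X → V
  leafEmb_inj : Function.Injective leafEmb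
  acyclic : ∀ u v : V, E u v → ¬ Relation.ReflTransGen E v u
  root_unique : ∃! r : V, ∀ u : V, ¬ E u r
  leaf_iff : ∀ v : V, (∀ w : V, ¬ E v w) ↔ ∃ x : X, leafEmb x = v

attribute [instance] Network.fintypeV

variable {X : Type}

namespace Network

/-- `reach u v` : there is a directed path (possibly trivial) from `u` to `v`,
i.e. `v ⪯ u`. -/
def reach (N : Network X) : N.V → N.V → Prop := Relation.ReflTransGen N.E

/-- The cluster of a vertex: the set of leaves reachable from it. -/
def cluster (N : Network X) (v : N.V) : Set X := {x | N.reach v (N.leafEmb x)}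

/-- The clustering system of a network. -/
def CS (N : Network X) : Set (Set X) := Set.range N.cluster

noncomputable def inDeg (N : Network X) (v : N.V) : ℕ := {u | N.E u v}.ncard
noncomputable def outDeg (N : Network X) (v : N.V) : ℕ := {w | N.E v w}.ncard

def IsHybrid (N : Network X) (v : N.V) : Prop := 1 < N.inDeg v
def IsTreeVertex (N : Network X) (v : N.V) : Prop := N.inDeg v ≤ 1
def IsLeaf (N : Network X) (v : N.V) : Prop := ∀ w : N.V, ¬ N.E v w

/-- The arc `(u,w)` is a shortcut: `w ≺ v` for some child `v ≠ w` of `u`. -/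
def IsShortcut (N : Network X) (u w : N.V) : Prop :=
  N.E u w ∧ ∃ v : N.V, N.E u v ∧ v ≠ w ∧ N.reach v w

def ShortcutFree (N : Network X) : Prop := ∀ u w : N.V, ¬ N.IsShortcut u w

/-- Path-cluster comparability. -/
def PCC (N : Network X) : Prop :=
  ∀ u v : N.V, (N.reach u v ∨ N.reach v u) ↔
    (N.cluster u ⊆ N.cluster v ∨ N.cluster v ⊆ N.cluster u)

def SemiRegular (N : Network X) : Prop := N.ShortcutFree ∧ N.PCC

/-- `N` is regular iff `v ↦ C(v)` is a digraph isomorphism onto the Hasse diagram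
of `𝒞_N` (ordered by inclusion). -/
def Regular (N : Network X) : Prop :=
  Function.Injective N.cluster ∧
  ∀ u v : N.V, N.E u v ↔
    (N.cluster v ⊂ N.cluster u ∧
      ¬ ∃ w : N.V, N.cluster v ⊂ N.cluster w ∧ N.cluster w ⊂ N.cluster u)

def Separated (N : Network X) : Prop := ∀ v : N.V, N.IsHybrid v → N.outDeg v = 1

def Phylogenetic (N : Network X) : Prop := ¬ ∃ v : N.V, N.outDeg v = 1 ∧ N.inDeg v ≤ 1

def Binary (N : Network X) : Prop :=
  (∀ v : N.V, N.IsTreeVertex v → (N.IsLeaf v ∨ N.outDeg v = 2)) ∧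
  (∀ v : N.V, N.IsHybrid v → N.inDeg v = 2 ∧ N.outDeg v = 1)

def TreeChild (N : Network X) : Prop :=
  ∀ v : N.V, ¬ N.IsLeaf v → ∃ u : N.V, N.E v u ∧ N.inDeg u = 1

/-- The underlying undirected (simple) graph of a network. -/
def UG (N : Network X) : SimpleGraph N.V where
  Adj u v := u ≠ v ∧ (N.E u v ∨ N.E v u)
  symm := ⟨fun _ _ h => ⟨Ne.symm h.1, Or.symm h.2⟩⟩
  loopless := ⟨fun _ h => h.1 rfl⟩

/-- A set of vertices is biconnected if it induces a connected undirected graph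
with no cutvertex. -/
def IsBiconn (N : Network X) (B : Set N.V) : Prop :=
  (N.UG.induce B).Connected ∧ ∀ v ∈ B, (N.UG.induce (B \ {v})).Preconnected

/-- A block: a maximal biconnected set of vertices. -/
def IsBlock (N : Network X) (B : Set N.V) : Prop :=
  N.IsBiconn B ∧ ∀ B' : Set N.V, B ⊆ B' → N.IsBiconn B' → B' = B

/-- The set `B` contains an undirected cycle (`B` is a non-trivial block when it is
a block). -/
def HasCycleIn (N : Network X) (B : Set N.V) : Prop :=
  ∃ (v : N.V) (c : N.UG.Walk v v), c.IsCycle ∧ ∀ w ∈ c.support, w ∈ B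

/-- Level-1: each block contains at most one hybrid vertex that is not
`⪯`-maximal in the block. -/
def Level1 (N : Network X) : Prop :=
  ∀ B : Set N.V, N.IsBlock B →
    Set.Subsingleton {v : N.V | v ∈ B ∧ N.IsHybrid v ∧ ∃ u ∈ B, u ≠ v ∧ N.reach u v}

/-- The set `B` (with the edges of the underlying undirected graph between its
members) is exactly an undirected cycle. -/
def IsCycleSet (N : Network X) (B : Set N.V) : Prop :=
  ∃ (v : N.V) (c : N.UG.Walk v v), c.IsCycle ∧ (∀ w : N.V, w ∈ c.support ↔ w ∈ B) ∧
    ∀ u w : N.V, (N.UG.Adj u w ∧ u ∈ B ∧ w ∈ B) ↔ s(u, w) ∈ c.edges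

/-- A galled tree: every non-trivial block is an undirected cycle. -/
def GalledTree (N : Network X) : Prop :=
  ∀ B : Set N.V, N.IsBlock B → N.HasCycleIn B → N.IsCycleSet B

/-- Quasi-binary: hybrid vertices have indegree 2 and outdegree 1, and the
`⪯`-maximal vertex of every non-trivial block has outdegree 2. -/
def QuasiBinary (N : Network X) : Prop :=
  (∀ v : N.V, N.IsHybrid v → N.inDeg v = 2 ∧ N.outDeg v = 1) ∧
  ∀ B : Set N.V, N.IsBlock B → N.HasCycleIn B →
    ∀ v ∈ B, (∀ u ∈ B, N.reach u v → u = v) → N.outDeg v = 2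

/-- `LCA A`: the `⪯`-minimal vertices among the common ancestors of `A`. -/
def LCA (N : Network X) (A : Set X) : Set N.V :=
  {v : N.V | A ⊆ N.cluster v ∧ ∀ u : N.V, A ⊆ N.cluster u → N.reach v u → u = v}

/-- An lca-network: every nonempty set of leaves has a unique least common
ancestor. -/
def LcaNetwork (N : Network X) : Prop :=
  ∀ A : Set X, A.Nonempty → ∃ v : N.V, N.LCA A = {v}

/-- A strong lca-network. -/
def StrongLca (N : Network X) : Prop :=
  N.LcaNetwork ∧
  ∀ A : Set X, A.Nonempty → ∃ x ∈ A, ∃ y ∈ A, N.LCA ({x, y} : Set X) = N.LCA A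

/-- Cluster networks in the sense of Huson & Rupp. -/
def ClusterNetwork (N : Network X) : Prop :=
  N.PCC ∧
  (∀ u v : N.V, N.cluster u = N.cluster v ↔
    (u = v ∨ (N.IsHybrid v ∧ N.E v u) ∨ (N.IsHybrid u ∧ N.E u v))) ∧
  (∀ u v : N.V, N.E v u →
    ¬ ∃ w : N.V, N.cluster u ⊂ N.cluster w ∧ N.cluster w ⊂ N.cluster v) ∧
  (∀ v : N.V, N.IsHybrid v →
    ∃ u : N.V, N.E v u ∧ (∀ w : N.V, N.E v w → w = u) ∧ N.IsTreeVertex u)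

/-- The multiplicity of a cluster in the cluster multiset `𝓜_N`. -/
noncomputable def multiplicity (N : Network X) (C : Set X) : ℕ :=
  Nat.card {v : N.V // N.cluster v = C}

/-- Isomorphism of networks on the same leaf set `X`, fixing every leaf. -/
def Isomorphic (N N' : Network X) : Prop :=
  ∃ φ : N.V ≃ N'.V, (∀ u v : N.V, N.E u v ↔ N'.E (φ u) (φ v)) ∧
    ∀ x : X, φ (N.leafEmb x) = N'.leafEmb x

end Network

/-- A clustering system on `X`. -/
def IsClusteringSystem {X : Type} (𝒞 : Set (Set X)) : Prop :=
  ∅ ∉ 𝒞 ∧ Set.univ ∈ 𝒞 ∧ ∀ x : X, {x} ∈ 𝒞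

/-- Two sets overlap if `A ∩ B ∉ {∅, A, B}`. -/
def Overlap {X : Type} (A B : Set X) : Prop :=
  (A ∩ B).Nonempty ∧ A ∩ B ≠ A ∧ A ∩ B ≠ B

/-- Closed (under pairwise nonempty intersections). -/
def IsClosedCS {X : Type} (𝒞 : Set (Set X)) : Prop :=
  ∀ A ∈ 𝒞, ∀ B ∈ 𝒞, (A ∩ B).Nonempty → A ∩ B ∈ 𝒞

/-- Property (L). -/
def PropertyL {X : Type} (𝒞 : Set (Set X)) : Prop :=
  ∀ C₁ ∈ 𝒞, ∀ C₂ ∈ 𝒞, ∀ C₃ ∈ 𝒞, Overlap C₁ C₂ → Overlap C₁ C₃ → C₁ ∩ C₂ = C₁ ∩ C₃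

/-- Weak hierarchy. -/
def WeakHierarchy {X : Type} (𝒞 : Set (Set X)) : Prop :=
  ∀ C₁ ∈ 𝒞, ∀ C₂ ∈ 𝒞, ∀ C₃ ∈ 𝒞,
    C₁ ∩ C₂ ∩ C₃ = C₁ ∩ C₂ ∨ C₁ ∩ C₂ ∩ C₃ = C₁ ∩ C₃ ∨
    C₁ ∩ C₂ ∩ C₃ = C₂ ∩ C₃ ∨ C₁ ∩ C₂ ∩ C₃ = ∅

/-- Property (N3O): no three distinct pairwise overlapping clusters. -/
def N3O {X : Type} (𝒞 : Set (Set X)) : Prop :=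
  ¬ ∃ C₁ ∈ 𝒞, ∃ C₂ ∈ 𝒞, ∃ C₃ ∈ 𝒞,
    C₁ ≠ C₂ ∧ C₁ ≠ C₃ ∧ C₂ ≠ C₃ ∧ Overlap C₁ C₂ ∧ Overlap C₁ C₃ ∧ Overlap C₂ C₃

/-- Property (2-Inc). -/
def TwoInc {X : Type} (𝒞 : Set (Set X)) : Prop :=
  ∀ C ∈ 𝒞,
    {A : Set X | A ∈ 𝒞 ∧ A ⊂ C ∧ ∀ B ∈ 𝒞, B ⊂ C → A ⊆ B → A = B}.ncard ≤ 2 ∧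
    {A : Set X | A ∈ 𝒞 ∧ C ⊂ A ∧ ∀ B ∈ 𝒞, C ⊂ B → B ⊆ A → A = B}.ncard ≤ 2

/-- The intersection closure: all nonempty intersections of nonempty subfamilies. -/
def interClosure {X : Type} (𝒞 : Set (Set X)) : Set (Set X) :=
  {A : Set X | A.Nonempty ∧ ∃ S : Set (Set X), S ⊆ 𝒞 ∧ S.Nonempty ∧ A = ⋂₀ S}

private lemma reach_antisymm {X : Type} (N : Network X) {u v : N.V}
    (h1 : N.reach u v) (h2 : N.reach v u) : u = v := by
  rcases Relation.ReflTransGen.cases_head h1 with h | ⟨w, hw, hwv⟩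
  · exact h
  · exact absurd (hwv.trans h2) (N.acyclic u w hw)

private lemma cluster_mono {X : Type} (N : Network X) {u v : N.V}
    (h : N.reach v u) : N.cluster u ⊆ N.cluster v :=
  fun _ hx => Relation.ReflTransGen.trans h hx

private lemma regular_reach {X : Type} [Fintype X] (N : Network X)
    (hreg : N.Regular) :
    ∀ n (v u : N.V), (N.cluster v).ncard ≤ n → N.cluster u ⊆ N.cluster v →
      N.reach v u := by
  intro n
  induction n with
  | zero =>
    intro v u hn hsub
    have hv : N.cluster v = ∅ := by
      have := Set.ncard_eq_zero (Set.toFinite _) |>.1 (Nat.le_zero.1 hn)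
      exact this
    have hu : N.cluster u = N.cluster v := by
      rw [hv] at hsub ⊢; exact Set.subset_eq_empty hsub rfl
    rw [hreg.1 hu]; exact Relation.ReflTransGen.refl
  | succ n ih =>
    intro v u hn hsub
    by_cases heq : N.cluster u = N.cluster v
    · rw [hreg.1 heq]; exact Relation.ReflTransGen.refl
    have hss : N.cluster u ⊂ N.cluster v := ⟨hsub, fun h => heq (le_antisymm hsub h)⟩
    set S : Set N.V := {w | N.cluster u ⊆ N.cluster w ∧ N.cluster w ⊂ N.cluster v}
    have huS : u ∈ S := ⟨subset_rfl, hss⟩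
    obtain ⟨w, hwS, hwmax⟩ := Set.Finite.exists_maximalFor N.cluster S
      (Set.toFinite S) ⟨u, huS⟩
    have hEvw : N.E v w := by
      rw [hreg.2]
      refine ⟨hwS.2, ?_⟩
      rintro ⟨z, hz1, hz2⟩
      have hzS : z ∈ S := ⟨hwS.1.trans hz1.1, hz2⟩
      exact hz1.2 (hwmax hzS hz1.1)
    have hcard : (N.cluster w).ncard ≤ n := by
      have := Set.ncard_lt_ncard hwS.2 (Set.toFinite _)
      omega
    exact Relation.ReflTransGen.head hEvw (ih w u hcard hwS.1)

/-- A network is regular iff (i) `C(u) ⊆ C(v) ↔ u ⪯ v` for all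
vertices and (ii) it is shortcut-free. -/
theorem regular_iff_clusterOrder_and_shortcutFree (X : Type) [Fintype X]
    (N : Network X) :
    N.Regular ↔
      ((∀ u v : N.V, N.cluster u ⊆ N.cluster v ↔ N.reach v u) ∧ N.ShortcutFree) := by
  constructor
  · intro hreg
    constructor
    · intro u v
      constructor
      · intro hsub
        exact regular_reach N hreg (N.cluster v).ncard v u le_rfl hsub
      · exact cluster_mono N
    · rintro u w ⟨hEuw, v, hEuv, hvw, hreach⟩
      have h1 : N.cluster w ⊆ N.cluster v := cluster_mono N hreach
      have h2 : N.cluster v ⊂ N.cluster u := ((hreg.2 u v).1 hEuv).1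
      have h3 : N.cluster w ≠ N.cluster v := fun h => hvw (hreg.1 h.symm)
      exact ((hreg.2 u w).1 hEuw).2 ⟨v, ⟨h1, fun h => h3 (le_antisymm h1 h)⟩, h2⟩
  · rintro ⟨hord, hsf⟩
    constructor
    · intro u v h
      exact reach_antisymm N ((hord v u).1 h.ge) ((hord u v).1 h.le)
    · intro u v
      constructor
      · intro hE
        have h1 : N.cluster v ⊂ N.cluster u := by
          refine ⟨cluster_mono N (Relation.ReflTransGen.single hE), fun h => ?_⟩
          exact N.acyclic u v hE ((hord u v).1 h)
        refine ⟨h1, ?_⟩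
        rintro ⟨w, hvw, hwu⟩
        have hruw : N.reach u w := (hord w u).1 hwu.1
        rcases Relation.ReflTransGen.cases_head hruw with h | ⟨w', hEuw', hw'w⟩
        · exact hwu.2 (h ▸ subset_rfl)
        · -- arc (u, v) is a shortcut via child w'
          have hrw'v : N.reach w' v := hw'w.trans ((hord v w).1 hvw.1)
          have hw'v : w' ≠ v := by
            intro h; subst h
            exact hvw.2 (cluster_mono N hw'w)
          exact hsf u v ⟨hE, w', hEuw', hw'v, hrw'v⟩
      · rintro ⟨hss, hnb⟩
        have hruv : N.reach u v := (hord v u).1 hss.1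
        rcases Relation.ReflTransGen.cases_head hruv with h | ⟨w, hEuw, hwv⟩
        · exact absurd (h ▸ subset_rfl) hss.2
        · by_cases hwv' : w = v
          · exact hwv' ▸ hEuw
          exfalso
          apply hnb
          refine ⟨w, ⟨cluster_mono N hwv, fun h => ?_⟩,
            ⟨cluster_mono N (Relation.ReflTransGen.single hEuw), fun h => ?_⟩⟩
          · exact hwv' (reach_antisymm N hwv ((hord w v).1 h))
          · exact N.acyclic u w hEuw ((hord u w).1 h)

end PhyloNet
end

section
/- A clustering system 𝒞 on a finite set X is closed if and only if there exists an lca-network N on X with 𝒞_N = 𝒞. -/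
namespace PhyloNet

variable {X : Type}

/- ## Auxiliary results -/

namespace Network

variable {X : Type}

lemma reach_antisymm (N : Network X) {a b : N.V} (h1 : N.reach a b) (h2 : N.reach b a) :
    a = b := by
  rcases Relation.ReflTransGen.cases_head h1 with h | ⟨c, hac, hcb⟩
  · exact h
  · exact ((N.acyclic a c hac) (hcb.trans h2)).elim

lemma cluster_mono (N : Network X) {u w : N.V} (h : N.reach u w) :
    N.cluster w ⊆ N.cluster u := fun _ hx => h.trans hx

/-- In a finite network, below any vertex satisfying `P` there is a `⪯`-minimal
vertex satisfying `P`. -/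
lemma exists_min (N : Network X) (P : N.V → Prop) (u : N.V) (hu : P u) :
    ∃ w : N.V, N.reach u w ∧ P w ∧ ∀ z, P z → N.reach w z → z = w := by
  let r : N.V → N.V → Prop := fun a b => N.reach b a ∧ a ≠ b
  haveI : IsTrans N.V r := ⟨by
    rintro a b c ⟨h1, h2⟩ ⟨h3, h4⟩
    refine ⟨h3.trans h1, fun h => ?_⟩
    subst h
    exact h2 (N.reach_antisymm h1 h3).symm⟩
  haveI : IsIrrefl N.V r := ⟨fun a h => h.2 rfl⟩
  have hwf : WellFounded r := Finite.wellFounded_of_trans_of_irrefl r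
  obtain ⟨w, ⟨hw1, hw2⟩, hmin⟩ := hwf.has_min {w | N.reach u w ∧ P w}
    ⟨u, Relation.ReflTransGen.refl, hu⟩
  refine ⟨w, hw1, hw2, fun z hz hrz => ?_⟩
  by_contra hne
  exact hmin z ⟨hw1.trans hrz, hz⟩ ⟨hrz, hne⟩

/-- The clustering system of an lca-network is closed. -/
lemma closed_of_lca (N : Network X) (h : N.LcaNetwork) : IsClosedCS N.CS := by
  rintro _ ⟨u, rfl⟩ _ ⟨v, rfl⟩ hne
  obtain ⟨w, hw⟩ := h (N.cluster u ∩ N.cluster v) hne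
  have hwmem : w ∈ N.LCA (N.cluster u ∩ N.cluster v) := by rw [hw]; rfl
  have key : ∀ z : N.V, N.cluster u ∩ N.cluster v ⊆ N.cluster z → N.reach z w := by
    intro z hz
    obtain ⟨w1, hr, hP, hmin⟩ :=
      N.exists_min (fun y => N.cluster u ∩ N.cluster v ⊆ N.cluster y) z hz
    have hw1 : w1 ∈ N.LCA (N.cluster u ∩ N.cluster v) := ⟨hP, fun y hy hry => hmin y hy hry⟩
    rw [hw, Set.mem_singleton_iff] at hw1
    exact hw1 ▸ hr
  have hcu : N.cluster w ⊆ N.cluster u := N.cluster_mono (key u Set.inter_subset_left)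
  have hcv : N.cluster w ⊆ N.cluster v := N.cluster_mono (key v Set.inter_subset_right)
  exact ⟨w, Set.Subset.antisymm (Set.subset_inter hcu hcv) hwmem.1⟩

end Network

section Hasse

variable {X : Type} [Fintype X]

/-- Vertices of the Hasse network: the clusters themselves. -/
abbrev HV (𝒞 : Set (Set X)) : Type := {C : Set X // C ∈ 𝒞}

/-- Edges of the Hasse network: the covering relation of `⊇`. -/
def hE (𝒞 : Set (Set X)) (u v : HV 𝒞) : Prop :=
  v.1 ⊂ u.1 ∧ ∀ w : HV 𝒞, ¬ (v.1 ⊂ w.1 ∧ w.1 ⊂ u.1)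

lemma hreach_subset {𝒞 : Set (Set X)} {u v : HV 𝒞}
    (h : Relation.ReflTransGen (hE 𝒞) u v) : v.1 ⊆ u.1 := by
  induction h with
  | refl => exact le_refl _
  | tail _ h2 ih => exact h2.1.subset.trans ih

lemma cover_down {𝒞 : Set (Set X)} {u : HV 𝒞} {s : Set X} (hs : s ∈ 𝒞) (hsu : s ⊂ u.1) :
    ∃ w : HV 𝒞, hE 𝒞 u w ∧ s ⊆ w.1 := by
  obtain ⟨m, hm, hmax⟩ := Set.Finite.exists_maximalFor id
    {w : Set X | w ∈ 𝒞 ∧ s ⊆ w ∧ w ⊂ u.1} (Set.toFinite _) ⟨s, hs, le_refl _, hsu⟩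
  refine ⟨⟨m, hm.1⟩, ⟨hm.2.2, ?_⟩, hm.2.1⟩
  rintro w ⟨h1, h2⟩
  exact h1.not_subset (hmax ⟨w.2, hm.2.1.trans h1.subset, h2⟩ h1.subset)

lemma cover_up {𝒞 : Set (Set X)} (h𝒞 : IsClusteringSystem 𝒞) {v : HV 𝒞}
    (hv : v.1 ≠ Set.univ) : ∃ w : HV 𝒞, hE 𝒞 w v := by
  obtain ⟨m, hm, hmin⟩ := Set.Finite.exists_minimalFor id
    {w : Set X | w ∈ 𝒞 ∧ v.1 ⊂ w} (Set.toFinite _)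
    ⟨Set.univ, h𝒞.2.1, Set.ssubset_univ_iff.mpr hv⟩
  refine ⟨⟨m, hm.1⟩, hm.2, ?_⟩
  rintro w ⟨h1, h2⟩
  exact h2.not_subset (hmin ⟨w.2, h1⟩ h2.subset)

lemma hreach_of_subset {𝒞 : Set (Set X)} :
    ∀ (n : ℕ) (u v : HV 𝒞), u.1.ncard ≤ n → v.1 ⊆ u.1 →
      Relation.ReflTransGen (hE 𝒞) u v := by
  intro n
  induction n with
  | zero =>
    intro u v hn hsub
    have hu : u.1 = ∅ := (Set.ncard_eq_zero (Set.toFinite _)).mp (Nat.le_zero.mp hn)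
    have hv : v.1 = ∅ := Set.subset_eq_empty (hu ▸ hsub) rfl
    have : v = u := Subtype.ext (hv.trans hu.symm)
    exact this ▸ Relation.ReflTransGen.refl
  | succ n ih =>
    intro u v hn hsub
    rcases eq_or_ne v u with rfl | hne
    · exact Relation.ReflTransGen.refl
    · have hss : v.1 ⊂ u.1 :=
        ssubset_of_subset_of_ne hsub (fun h => hne (Subtype.ext h))
      obtain ⟨w, hw, hvw⟩ := cover_down v.2 hss
      have hlt : w.1.ncard < u.1.ncard := Set.ncard_lt_ncard hw.1 (Set.toFinite _)
      exact Relation.ReflTransGen.head hw (ih w v (by omega) hvw)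

lemma hreach_iff {𝒞 : Set (Set X)} (u v : HV 𝒞) :
    Relation.ReflTransGen (hE 𝒞) u v ↔ v.1 ⊆ u.1 :=
  ⟨hreach_subset, hreach_of_subset u.1.ncard u v le_rfl⟩

/-- The Hasse network of a clustering system. -/
noncomputable def hasseNet (𝒞 : Set (Set X)) (h𝒞 : IsClusteringSystem 𝒞) : Network X where
  V := HV 𝒞
  fintypeV := Fintype.ofFinite _
  E := hE 𝒞
  leafEmb x := ⟨{x}, h𝒞.2.2 x⟩
  leafEmb_inj a b h := by simpa using congrArg Subtype.val h
  acyclic u v h hr := h.1.ne (le_antisymm h.1.subset (hreach_subset hr))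
  root_unique := by
    refine ⟨⟨Set.univ, h𝒞.2.1⟩, fun u h => h.1.not_subset (Set.subset_univ _), ?_⟩
    intro y hy
    refine Subtype.ext ?_
    by_contra hne
    obtain ⟨w, hw⟩ := cover_up h𝒞 hne
    exact hy w hw
  leaf_iff v := by
    constructor
    · intro h
      have hne : v.1.Nonempty := Set.nonempty_iff_ne_empty.mpr (fun h0 => h𝒞.1 (h0 ▸ v.2))
      obtain ⟨x, hx⟩ := hne
      rcases eq_or_ne v.1 {x} with heq | hne'
      · exact ⟨x, Subtype.ext heq.symm⟩
      · obtain ⟨w, hw, _⟩ := cover_down (h𝒞.2.2 x)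
          (ssubset_of_subset_of_ne (Set.singleton_subset_iff.mpr hx) (Ne.symm hne'))
        exact (h w hw).elim
    · rintro ⟨x, rfl⟩ w hw
      rcases Set.subset_singleton_iff_eq.mp hw.1.subset with h0 | h0
      · exact h𝒞.1 (h0 ▸ w.2)
      · exact hw.1.ne h0

lemma hasseNet_cluster (𝒞 : Set (Set X)) (h𝒞 : IsClusteringSystem 𝒞)
    (v : (hasseNet 𝒞 h𝒞).V) : (hasseNet 𝒞 h𝒞).cluster v = v.1 := by
  ext x
  show Relation.ReflTransGen (hE 𝒞) v ⟨{x}, h𝒞.2.2 x⟩ ↔ x ∈ v.1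
  exact (hreach_iff _ _).trans Set.singleton_subset_iff

lemma hasseNet_CS (𝒞 : Set (Set X)) (h𝒞 : IsClusteringSystem 𝒞) :
    (hasseNet 𝒞 h𝒞).CS = 𝒞 := by
  ext C
  constructor
  · rintro ⟨v, rfl⟩
    rw [hasseNet_cluster]
    exact v.2
  · intro hC
    exact ⟨⟨C, hC⟩, hasseNet_cluster 𝒞 h𝒞 ⟨C, hC⟩⟩

lemma closed_biInter {𝒞 : Set (Set X)} (hcl : IsClosedCS 𝒞) {A : Set X} (hA : A.Nonempty)
    (S : Finset (Set X)) (hS : S.Nonempty) (h : ∀ C ∈ S, C ∈ 𝒞 ∧ A ⊆ C) :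
    (⋂ C ∈ S, C) ∈ 𝒞 ∧ A ⊆ ⋂ C ∈ S, C := by
  revert h
  induction hS using Finset.Nonempty.cons_induction with
  | singleton a =>
    intro h
    simpa using h a (Finset.mem_singleton_self a)
  | cons a s ha hs ih =>
    intro h
    have hih := ih (fun C hC => h C (Finset.mem_cons_of_mem hC))
    have hhd := h a (Finset.mem_cons_self a s)
    have heq : (⋂ C ∈ Finset.cons a s ha, (C : Set X)) = a ∩ ⋂ C ∈ s, C := by
      simp [Finset.cons_eq_insert]
    rw [heq]
    have hsub : A ⊆ a ∩ ⋂ C ∈ s, C := Set.subset_inter hhd.2 hih.2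
    exact ⟨hcl _ hhd.1 _ hih.1 (hA.mono hsub), hsub⟩

lemma hasseNet_lca (𝒞 : Set (Set X)) (h𝒞 : IsClusteringSystem 𝒞)
    (hcl : IsClosedCS 𝒞) : (hasseNet 𝒞 h𝒞).LcaNetwork := by
  intro A hA
  set S : Finset (Set X) := (Set.toFinite {C | C ∈ 𝒞 ∧ A ⊆ C}).toFinset with hSdef
  have hmemS : ∀ C, C ∈ S ↔ C ∈ 𝒞 ∧ A ⊆ C := by
    intro C
    simp [hSdef]
  have hSne : S.Nonempty := ⟨Set.univ, (hmemS _).mpr ⟨h𝒞.2.1, Set.subset_univ _⟩⟩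
  obtain ⟨hD𝒞, hAD⟩ := closed_biInter hcl hA S hSne (fun C hC => (hmemS C).mp hC)
  have hDsub : ∀ C ∈ 𝒞, A ⊆ C → (⋂ C ∈ S, C) ⊆ C := fun C h1 h2 =>
    Set.biInter_subset_of_mem ((hmemS C).mpr ⟨h1, h2⟩)
  refine ⟨⟨⋂ C ∈ S, C, hD𝒞⟩, ?_⟩
  ext w
  simp only [Network.LCA, Set.mem_setOf_eq, Set.mem_singleton_iff, hasseNet_cluster]
  constructor
  · rintro ⟨h1, h2⟩
    exact (h2 ⟨⋂ C ∈ S, C, hD𝒞⟩ hAD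
      (hreach_of_subset _ _ _ le_rfl (hDsub w.1 w.2 h1))).symm
  · rintro rfl
    exact ⟨hAD, fun u hu hru =>
      Subtype.ext (le_antisymm (hreach_subset hru) (hDsub u.1 u.2 hu))⟩

end Hasse

/-- A clustering system is closed iff it is the clustering system of
some lca-network. -/
theorem closed_iff_exists_lcaNetwork (X : Type) [Fintype X] (𝒞 : Set (Set X))
    (h𝒞 : IsClusteringSystem 𝒞) :
    IsClosedCS 𝒞 ↔ ∃ N : Network X, N.LcaNetwork ∧ N.CS = 𝒞 := by
  constructor
  · intro hcl
    exact ⟨hasseNet 𝒞 h𝒞, hasseNet_lca 𝒞 h𝒞 hcl, hasseNet_CS 𝒞 h𝒞⟩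
  · rintro ⟨N, hN, rfl⟩
    exact N.closed_of_lca hN

end PhyloNet
end
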